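/- Let F be an algebraically closed field of prime characteristic p, V a finite-dimensional F-vector space, and u an F-linear endomorphism of V. Then for every natural number k, the p-order of u^{p^k} equals the p-order of u: ord(u^{p^k}) = ord(u). -/

import Mathlib

attribute [local instance] ZMod.algebra

/-- `Λ(u)`: the `𝔽_p`-subspace of `F` spanned by the eigenvalues of `u`. -/
noncomputable def pLambda (p : ℕ) {F : Type} [Field F] [CharP F p]
    {V : Type} [AddCommGroup V] [Module F V] (u : Module.End F V) :
    Submodule (ZMod p) F :=
  Submodule.span (ZMod p) {μ : F | Module.End.HasEigenvalue u μ}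

/-- The `p`-order of `u`: the dimension of `Λ(u)` over the prime field `𝔽_p`. -/
noncomputable def pOrd (p : ℕ) {F : Type} [Field F] [CharP F p]
    {V : Type} [AddCommGroup V] [Module F V] (u : Module.End F V) : ℕ :=
  Module.finrank (ZMod p) (pLambda p u)

/-- The `p^k`-power Frobenius as a `ZMod p`-linear map. -/
noncomputable def frobLinear (p : ℕ) [Fact p.Prime] (F : Type) [Field F] [CharP F p] (k : ℕ) :
    F →ₗ[ZMod p] F where
  toFun x := x ^ p ^ k
  map_add' x y := add_pow_char_pow x y p k
  map_smul' c x := by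
    simp only [Algebra.smul_def, mul_pow, RingHom.id_apply]
    congr 1
    rw [← map_pow, ZMod.pow_card_pow]

theorem frobLinear_injective (p : ℕ) [Fact p.Prime] (F : Type) [Field F] [CharP F p] (k : ℕ) :
    Function.Injective (frobLinear p F k) := by
  intro x y h
  exact (iterateFrobenius F p k).injective (by simpa [iterateFrobenius_def] using show x ^ p ^ k = y ^ p ^ k from h)

/-- Over an algebraically closed field of prime characteristic `p`, the `p`-order
of `u^(p^k)` equals the `p`-order of `u`, for every endomorphism `u` of a finite-dimensional
vector space and every `k`. -/
theorem pOrd_pow_p_pow (p : ℕ) (hp : p.Prime) (F : Type) [Field F] [IsAlgClosed F] [CharP F p]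
    (V : Type) [AddCommGroup V] [Module F V] [FiniteDimensional F V]
    (u : Module.End F V) (k : ℕ) :
    pOrd p (u ^ p ^ k) = pOrd p u := by
  haveI : Fact p.Prime := ⟨hp⟩
  have hset : {μ : F | Module.End.HasEigenvalue (u ^ p ^ k) μ}
      = (frobLinear p F k) '' {μ : F | Module.End.HasEigenvalue u μ} := by
    ext μ
    simp only [Set.mem_setOf_eq, Module.End.hasEigenvalue_iff_mem_spectrum]
    rw [spectrum.map_pow_of_pos u (pow_pos hp.pos k)]
    rfl
  have hmap : pLambda p (u ^ p ^ k) = Submodule.map (frobLinear p F k) (pLambda p u) := by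
    rw [pLambda, hset, Submodule.span_image]; rfl
  unfold pOrd
  rw [hmap]
  exact (LinearEquiv.finrank_eq
    (Submodule.equivMapOfInjective _ (frobLinear_injective p F k) _)).symm
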